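/- Let G be a real symmetric 4×4 matrix in emission form with det G < 0, let K = G⁻¹, and let A = √(G₂₃G₁₄), B = √(G₁₃G₂₄), C = √(G₁₂G₃₄). Then the cosines of the angles between the natural vectors are given by: −K₂₃/(√(−K₂₂)·√(−K₃₃)) = (A² − B² − C²)/(2BC), −K₁₃/(√(−K₁₁)·√(−K₃₃)) = (B² − A² − C²)/(2AC), and −K₁₂/(√(−K₁₁)·√(−K₂₂)) = (C² − A² − B²)/(2AB). -/

import Mathlib

lemma aux14 (E w u v num num' P Q : ℝ) (hE : 0 < E) (hw : 0 < w) (hu : 0 < u) (hv : 0 < v)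
    (hP : 0 ≤ P) (hPQ : P * Q = E^2 * (2*w)^2 * u * v) (hnum : num = num') :
    E * (w * num) / (Real.sqrt P * Real.sqrt Q) = num' / (2 * Real.sqrt u * Real.sqrt v) := by
  have hsu := Real.sq_sqrt hu.le
  have hsv := Real.sq_sqrt hv.le
  have h : Real.sqrt P * Real.sqrt Q = E * (2*w) * Real.sqrt u * Real.sqrt v := by
    rw [← Real.sqrt_mul hP, hPQ]
    have h2 : (E*(2*w)*Real.sqrt u*Real.sqrt v)^2 = E^2*(2*w)^2*u*v := by
      rw [show (E*(2*w)*Real.sqrt u*Real.sqrt v)^2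
          = E^2*(2*w)^2*(Real.sqrt u^2)*(Real.sqrt v^2) from by ring, hsu, hsv]
    rw [← h2, Real.sqrt_sq (by positivity)]
  rw [h, hnum]
  have h1 : Real.sqrt u ≠ 0 := by positivity
  have h2 : Real.sqrt v ≠ 0 := by positivity
  have h3 : E ≠ 0 := hE.ne'
  have h4 : w ≠ 0 := hw.ne'
  field_simp

lemma key14 (a b c d e f : ℝ) (ha : 0 < a) (hb : 0 < b) (hc : 0 < c) (hd : 0 < d)
    (he : 0 < e) (hf : 0 < f)
    (hdet : (!![0,a,b,c;a,0,d,e;b,d,0,f;c,e,f,0] : Matrix (Fin 4) (Fin 4) ℝ).det < 0) :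
    -((!![0,a,b,c;a,0,d,e;b,d,0,f;c,e,f,0] : Matrix (Fin 4) (Fin 4) ℝ)⁻¹ 1 2) / (Real.sqrt (-((!![0,a,b,c;a,0,d,e;b,d,0,f;c,e,f,0] : Matrix (Fin 4) (Fin 4) ℝ)⁻¹ 1 1)) * Real.sqrt (-((!![0,a,b,c;a,0,d,e;b,d,0,f;c,e,f,0] : Matrix (Fin 4) (Fin 4) ℝ)⁻¹ 2 2)))
      = (Real.sqrt (d * c) ^ 2 - Real.sqrt (b * e) ^ 2 - Real.sqrt (a * f) ^ 2)
        / (2 * Real.sqrt (b * e) * Real.sqrt (a * f))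
    ∧ -((!![0,a,b,c;a,0,d,e;b,d,0,f;c,e,f,0] : Matrix (Fin 4) (Fin 4) ℝ)⁻¹ 0 2) / (Real.sqrt (-((!![0,a,b,c;a,0,d,e;b,d,0,f;c,e,f,0] : Matrix (Fin 4) (Fin 4) ℝ)⁻¹ 0 0)) * Real.sqrt (-((!![0,a,b,c;a,0,d,e;b,d,0,f;c,e,f,0] : Matrix (Fin 4) (Fin 4) ℝ)⁻¹ 2 2)))
      = (Real.sqrt (b * e) ^ 2 - Real.sqrt (d * c) ^ 2 - Real.sqrt (a * f) ^ 2)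
        / (2 * Real.sqrt (d * c) * Real.sqrt (a * f))
    ∧ -((!![0,a,b,c;a,0,d,e;b,d,0,f;c,e,f,0] : Matrix (Fin 4) (Fin 4) ℝ)⁻¹ 0 1) / (Real.sqrt (-((!![0,a,b,c;a,0,d,e;b,d,0,f;c,e,f,0] : Matrix (Fin 4) (Fin 4) ℝ)⁻¹ 0 0)) * Real.sqrt (-((!![0,a,b,c;a,0,d,e;b,d,0,f;c,e,f,0] : Matrix (Fin 4) (Fin 4) ℝ)⁻¹ 1 1)))
      = (Real.sqrt (a * f) ^ 2 - Real.sqrt (d * c) ^ 2 - Real.sqrt (b * e) ^ 2)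
        / (2 * Real.sqrt (d * c) * Real.sqrt (b * e)) := by
  set M : Matrix (Fin 4) (Fin 4) ℝ := !![0,a,b,c;a,0,d,e;b,d,0,f;c,e,f,0] with hM
  have hD0 : M.det ≠ 0 := ne_of_lt hdet
  have hinv : (!![0,a,b,c;a,0,d,e;b,d,0,f;c,e,f,0] : Matrix (Fin 4) (Fin 4) ℝ)⁻¹ = (M.det)⁻¹ • M.adjugate := by
    rw [Matrix.inv_def, Ring.inverse_eq_inv']
  have hE : (0:ℝ) < -M.det⁻¹ := by
    simp only [neg_pos]
    exact inv_lt_zero.mpr hdet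
  have adjcalc : ∀ i j : Fin 4, M.adjugate i j =
      (M.updateRow j (Pi.single i 1)).det := fun i j => Matrix.adjugate_apply M i j
  have h00 : M.adjugate 0 0 = 2*d*e*f := by
    rw [Matrix.adjugate_apply]
    simp [Matrix.det_succ_row_zero, Fin.sum_univ_succ, Fin.succAbove, Fin.ext_iff,
      Fin.castSucc, Fin.castAdd, Fin.castLE, Matrix.updateRow_apply, Pi.single_apply, M, -Fin.val_eq_zero_iff]
    ring
  have h11 : M.adjugate 1 1 = 2*b*c*f := by
    rw [Matrix.adjugate_apply]
    simp [Matrix.det_succ_row_zero, Fin.sum_univ_succ, Fin.succAbove, Fin.ext_iff,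
      Fin.castSucc, Fin.castAdd, Fin.castLE, Matrix.updateRow_apply, Pi.single_apply, M]
    ring
  have h22 : M.adjugate 2 2 = 2*a*c*e := by
    rw [Matrix.adjugate_apply]
    simp [Matrix.det_succ_row_zero, Fin.sum_univ_succ, Fin.succAbove, Fin.ext_iff,
      Fin.castSucc, Fin.castAdd, Fin.castLE, Matrix.updateRow_apply, Pi.single_apply, M]
    ring
  have h12 : M.adjugate 1 2 = c*(c*d - a*f - b*e) := by
    rw [Matrix.adjugate_apply]
    simp [Matrix.det_succ_row_zero, Fin.sum_univ_succ, Fin.succAbove, Fin.ext_iff,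
      Fin.castSucc, Fin.castAdd, Fin.castLE, Matrix.updateRow_apply, Pi.single_apply, M]
    ring
  have h02 : M.adjugate 0 2 = e*(b*e - a*f - c*d) := by
    rw [Matrix.adjugate_apply]
    simp [Matrix.det_succ_row_zero, Fin.sum_univ_succ, Fin.succAbove, Fin.ext_iff,
      Fin.castSucc, Fin.castAdd, Fin.castLE, Matrix.updateRow_apply, Pi.single_apply, M, -Fin.val_eq_zero_iff]
    ring
  have h01 : M.adjugate 0 1 = f*(a*f - b*e - c*d) := by
    rw [Matrix.adjugate_apply]
    simp [Matrix.det_succ_row_zero, Fin.sum_univ_succ, Fin.succAbove, Fin.ext_iff,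
      Fin.castSucc, Fin.castAdd, Fin.castLE, Matrix.updateRow_apply, Pi.single_apply, M, -Fin.val_eq_zero_iff]
    ring
  have entry : ∀ i j : Fin 4, (!![0,a,b,c;a,0,d,e;b,d,0,f;c,e,f,0] : Matrix (Fin 4) (Fin 4) ℝ)⁻¹ i j = M.det⁻¹ * M.adjugate i j := by
    intro i j; rw [hinv]; simp
  rw [Real.sq_sqrt (by positivity : (0:ℝ) ≤ d*c), Real.sq_sqrt (by positivity : (0:ℝ) ≤ b*e),
    Real.sq_sqrt (by positivity : (0:ℝ) ≤ a*f)]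
  refine ⟨?_, ?_, ?_⟩
  · rw [entry 1 2, entry 1 1, entry 2 2, h12, h11, h22, ← neg_mul, ← neg_mul, ← neg_mul]
    exact aux14 _ _ _ _ _ _ _ _ hE hc (by positivity) (by positivity) (by positivity)
      (by ring) (by ring)
  · rw [entry 0 2, entry 0 0, entry 2 2, h02, h00, h22, ← neg_mul, ← neg_mul, ← neg_mul]
    exact aux14 _ _ _ _ _ _ _ _ hE he (by positivity) (by positivity) (by positivity)
      (by ring) (by ring)
  · rw [entry 0 1, entry 0 0, entry 1 1, h01, h00, h11, ← neg_mul, ← neg_mul, ← neg_mul]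
    exact aux14 _ _ _ _ _ _ _ _ hE hf (by positivity) (by positivity) (by positivity)
      (by ring) (by ring)

/-- For a real symmetric 4×4 matrix `G` in emission form with
`det G < 0`, `K = G⁻¹` and `A = √(G₂₃G₁₄)`, `B = √(G₁₃G₂₄)`, `C = √(G₁₂G₃₄)`,
the cosines of the angles between the natural vectors are
`−K₂₃/(√(−K₂₂)√(−K₃₃)) = (A²−B²−C²)/(2BC)`,
`−K₁₃/(√(−K₁₁)√(−K₃₃)) = (B²−A²−C²)/(2AC)`,
`−K₁₂/(√(−K₁₁)√(−K₂₂)) = (C²−A²−B²)/(2AB)`. -/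
theorem stmt_14 (G : Matrix (Fin 4) (Fin 4) ℝ)
    (hsymm : G.IsSymm) (hdiag : ∀ i, G i i = 0)
    (hpos : ∀ i j, i ≠ j → 0 < G i j) (hdet : G.det < 0) :
    -(G⁻¹ 1 2) / (Real.sqrt (-(G⁻¹ 1 1)) * Real.sqrt (-(G⁻¹ 2 2)))
      = (Real.sqrt (G 1 2 * G 0 3) ^ 2 - Real.sqrt (G 0 2 * G 1 3) ^ 2
          - Real.sqrt (G 0 1 * G 2 3) ^ 2)
        / (2 * Real.sqrt (G 0 2 * G 1 3) * Real.sqrt (G 0 1 * G 2 3))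
    ∧ -(G⁻¹ 0 2) / (Real.sqrt (-(G⁻¹ 0 0)) * Real.sqrt (-(G⁻¹ 2 2)))
      = (Real.sqrt (G 0 2 * G 1 3) ^ 2 - Real.sqrt (G 1 2 * G 0 3) ^ 2
          - Real.sqrt (G 0 1 * G 2 3) ^ 2)
        / (2 * Real.sqrt (G 1 2 * G 0 3) * Real.sqrt (G 0 1 * G 2 3))
    ∧ -(G⁻¹ 0 1) / (Real.sqrt (-(G⁻¹ 0 0)) * Real.sqrt (-(G⁻¹ 1 1)))
      = (Real.sqrt (G 0 1 * G 2 3) ^ 2 - Real.sqrt (G 1 2 * G 0 3) ^ 2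
          - Real.sqrt (G 0 2 * G 1 3) ^ 2)
        / (2 * Real.sqrt (G 1 2 * G 0 3) * Real.sqrt (G 0 2 * G 1 3)) := by
  set a := G 0 1 with ha'
  set b := G 0 2 with hb'
  set c := G 0 3 with hc'
  set d := G 1 2 with hd'
  set e := G 1 3 with he'
  set f := G 2 3 with hf'
  have hG : G = !![0, a, b, c; a, 0, d, e; b, d, 0, f; c, e, f, 0] := by
    ext i j
    fin_cases i <;> fin_cases j <;> simp [hdiag, ha', hb', hc', hd', he', hf'] <;>
      exact hsymm.apply _ _
  rw [hG] at hdet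
  rw [hG]
  have key := key14 a b c d e f (hpos 0 1 (by decide)) (hpos 0 2 (by decide))
    (hpos 0 3 (by decide)) (hpos 1 2 (by decide)) (hpos 1 3 (by decide))
    (hpos 2 3 (by decide)) hdet
  simpa using key
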